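/- Let B ≺ D be positive definite d×d matrices with D − B = xxᵀ for some x ∈ ℝ^d. Then xᵀD⁻¹x ≤ ln(det D / det B). -/

import Mathlib

open Matrix

/-- If B and D are positive definite with D − B = xxᵀ, then
xᵀD⁻¹x ≤ ln(det D / det B). -/
theorem stmt_6 (d : ℕ) (B D : Matrix (Fin d) (Fin d) ℝ)
    (hB : B.PosDef) (hD : D.PosDef) (x : Fin d → ℝ)
    (hdiff : D - B = vecMulVec x x) :
    x ⬝ᵥ (D⁻¹ *ᵥ x) ≤ Real.log (D.det / B.det) := by
  set t : ℝ := x ⬝ᵥ (D⁻¹ *ᵥ x) with ht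
  have hBD : B = D + replicateCol Unit (-x) * replicateRow Unit x := by
    rw [← vecMulVec_eq Unit (-x) x]
    have hv : vecMulVec (-x) x = -(vecMulVec x x) := by
      ext i j; simp [vecMulVec]
    rw [hv, ← hdiff]; abel
  have hDdet : IsUnit D.det := isUnit_iff_ne_zero.mpr (ne_of_gt hD.det_pos)
  have hentry : ((1 : Matrix Unit Unit ℝ) + replicateRow Unit x * D⁻¹ * replicateCol Unit (-x)) () ()
      = 1 - t := by
    simp [Matrix.mul_apply, Matrix.one_apply, mulVec, dotProduct, Finset.mul_sum,
      Finset.sum_mul, sub_eq_add_neg, ← Finset.sum_neg_distrib, ht]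
    rw [Finset.sum_comm]
    apply Finset.sum_congr rfl; intro i _
    apply Finset.sum_congr rfl; intro j _
    ring
  have hdetB : B.det = D.det * (1 - t) := by
    rw [hBD, det_add_replicateCol_mul_replicateRow hDdet]
    congr 1
    rw [det_unique, hentry]
  have htnonneg : 0 ≤ t := by
    simpa using hD.inv.posSemidef.re_dotProduct_nonneg x
  have h1t : 0 < 1 - t := by
    have hb := hB.det_pos
    rw [hdetB] at hb
    nlinarith [hD.det_pos]
  have hlog : Real.log (1 - t) ≤ -t := by
    have := Real.log_le_sub_one_of_pos h1t
    linarith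
  have hq : D.det / B.det = (1 - t)⁻¹ := by
    rw [hdetB, div_mul_eq_div_div, div_self (ne_of_gt hD.det_pos), one_div]
  rw [hq, Real.log_inv]
  linarith
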